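/- In the particular setting of Lemma 1 of the paper: with K symmetric positive definite, K̂ symmetric positive definite, B = I + σ⁻²K, α ∈ ℝⁿ, the KL divergence between p̄ = N(Kα, KB⁻¹) and p = N(0, K̂) equals (1/2)[−log det(K̂⁻¹K) + log det B + tr(K̂⁻¹K B⁻¹) + αᵀKα + αᵀK(K̂⁻¹K − I)α − n]. -/

import Mathlib

open Real Matrix MeasureTheory

/-- Multivariate normal density with mean `m` and covariance `S`. -/
noncomputable def mvnPdf {ι : Type*} [Fintype ι] [DecidableEq ι]
    (m : ι → ℝ) (S : Matrix ι ι ℝ) (x : ι → ℝ) : ℝ :=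
  (2 * Real.pi) ^ (-(Fintype.card ι : ℝ) / 2) * S.det ^ (-(1 : ℝ) / 2) *
    Real.exp (-(1 / 2) * ((x - m) ⬝ᵥ (S⁻¹ *ᵥ (x - m))))

noncomputable def g0 (t : ℝ) : ℝ := (2 * π) ^ (-(1 : ℝ) / 2) * Real.exp (-(1 / 2) * t ^ 2)

lemma twopi_pos : (0:ℝ) < 2 * π := by positivity

lemma integrable_exp_half : Integrable (fun t : ℝ => Real.exp (-(1/2 : ℝ) * t ^ 2)) :=
  integrable_exp_neg_mul_sq (by norm_num)

lemma integrable_g0 : Integrable g0 := integrable_exp_half.const_mul _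

lemma integrable_id_exp : Integrable (fun t : ℝ => t * Real.exp (-(1/2 : ℝ) * t ^ 2)) :=
  integrable_mul_exp_neg_mul_sq (by norm_num)

lemma integrable_id_g0 : Integrable (fun t : ℝ => t * g0 t) := by
  have : (fun t : ℝ => t * g0 t)
      = fun t => (2 * π) ^ (-(1 : ℝ) / 2) * (t * Real.exp (-(1/2 : ℝ) * t ^ 2)) := by
    funext t; unfold g0; ring
  rw [this]
  exact integrable_id_exp.const_mul _

lemma integrable_sq_exp : Integrable (fun t : ℝ => t ^ 2 * Real.exp (-(1/2 : ℝ) * t ^ 2)) := by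
  have h := integrable_rpow_mul_exp_neg_mul_sq (b := 1/2) (by norm_num) (s := 2) (by norm_num)
  have : (fun t : ℝ => t ^ (2:ℝ) * Real.exp (-(1/2 : ℝ) * t ^ 2))
      = fun t : ℝ => t ^ 2 * Real.exp (-(1/2 : ℝ) * t ^ 2) := by
    funext t
    rw [show (2:ℝ) = ((2:ℕ):ℝ) by norm_num, Real.rpow_natCast]
  rwa [this] at h

lemma integrable_sq_g0 : Integrable (fun t : ℝ => t ^ 2 * g0 t) := by
  have : (fun t : ℝ => t ^ 2 * g0 t)
      = fun t => (2 * π) ^ (-(1 : ℝ) / 2) * (t ^ 2 * Real.exp (-(1/2 : ℝ) * t ^ 2)) := by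
    funext t; unfold g0; ring
  rw [this]
  exact integrable_sq_exp.const_mul _

lemma int_exp_half : ∫ t : ℝ, Real.exp (-(1/2 : ℝ) * t ^ 2) = Real.sqrt (2 * π) := by
  rw [integral_gaussian, show π / (1/2 : ℝ) = 2 * π by ring]

lemma int_g0 : ∫ t : ℝ, g0 t = 1 := by
  unfold g0
  rw [MeasureTheory.integral_const_mul, int_exp_half, Real.sqrt_eq_rpow,
    ← Real.rpow_add twopi_pos]
  norm_num

lemma int_id_g0 : ∫ t : ℝ, t * g0 t = 0 := by
  have hInt := integrable_id_g0
  rw [← intervalIntegral.integral_Iic_add_Ioi (b := 0) hInt.integrableOn hInt.integrableOn]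
  have h1 : ∫ t in Set.Iic (0:ℝ), t * g0 t = ∫ t in Set.Ioi (0:ℝ), (-t) * g0 (-t) := by
    have := integral_comp_neg_Ioi (0:ℝ) (fun s => s * g0 s)
    simp only [neg_zero] at this
    exact this.symm
  have h2 : ∀ t : ℝ, (-t) * g0 (-t) = -(t * g0 t) := by
    intro t; unfold g0; rw [neg_sq]; ring
  simp_rw [h1, h2, integral_neg]
  ring

lemma int_sq_g0 : ∫ t : ℝ, t ^ 2 * g0 t = 1 := by
  have h12 : ((1:ℝ)/2) ^ (-(3/2):ℝ) = (2:ℝ) ^ ((3:ℝ)/2) := by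
    rw [show (1:ℝ)/2 = 2⁻¹ by norm_num, ← Real.rpow_neg_one,
      ← Real.rpow_mul (by norm_num : (0:ℝ) ≤ 2)]
    norm_num
  have h2 : (2:ℝ) ^ ((3:ℝ)/2) = 2 * 2 ^ ((1:ℝ)/2) := by
    rw [show (3:ℝ)/2 = 1 + 1/2 by norm_num, Real.rpow_add (by norm_num : (0:ℝ) < 2),
      Real.rpow_one]
  have hs : Real.sqrt (2 * π) = 2 ^ ((1:ℝ)/2) * Real.sqrt π := by
    rw [Real.sqrt_mul (by norm_num : (0:ℝ) ≤ 2), Real.sqrt_eq_rpow]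
  have key : ∫ t : ℝ, t ^ 2 * Real.exp (-(1/2 : ℝ) * t ^ 2) = Real.sqrt (2 * π) := by
    have habs : ∀ t : ℝ, t ^ 2 * Real.exp (-(1/2 : ℝ) * t ^ 2)
        = |t| ^ 2 * Real.exp (-(1/2 : ℝ) * |t| ^ 2) := by
      intro t; rw [sq_abs]
    calc ∫ t : ℝ, t ^ 2 * Real.exp (-(1/2 : ℝ) * t ^ 2)
        = ∫ t : ℝ, (fun s => s ^ 2 * Real.exp (-(1/2 : ℝ) * s ^ 2)) |t| := by
          simp_rw [← habs]
      _ = 2 * ∫ t in Set.Ioi (0:ℝ), t ^ 2 * Real.exp (-(1/2 : ℝ) * t ^ 2) :=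
          integral_comp_abs (f := fun s => s ^ 2 * Real.exp (-(1/2 : ℝ) * s ^ 2))
      _ = 2 * ∫ t in Set.Ioi (0:ℝ), t ^ (2:ℝ) * Real.exp (-(1/2 : ℝ) * t ^ (2:ℝ)) := by
          congr 1
          refine setIntegral_congr_fun measurableSet_Ioi (fun t ht => ?_)
          rw [show (2:ℝ) = ((2:ℕ):ℝ) by norm_num, Real.rpow_natCast]
      _ = 2 * ((1/2 : ℝ) ^ (-((2:ℝ) + 1) / 2) * (1 / 2) * Real.Gamma (((2:ℝ) + 1) / 2)) := by
          rw [integral_rpow_mul_exp_neg_mul_rpow (by norm_num) (by norm_num) (by norm_num)]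
      _ = Real.sqrt (2 * π) := by
          rw [show ((2:ℝ) + 1) / 2 = 1/2 + 1 by norm_num, Real.Gamma_add_one (by norm_num),
            Real.Gamma_one_half_eq, show (-((2:ℝ)+1)/2 : ℝ) = (-(3/2) : ℝ) by norm_num,
            h12, h2, hs]
          ring
  have : (fun t : ℝ => t ^ 2 * g0 t)
      = fun t => (2 * π) ^ (-(1 : ℝ) / 2) * (t ^ 2 * Real.exp (-(1/2 : ℝ) * t ^ 2)) := by
    funext t; unfold g0; ring
  rw [this, MeasureTheory.integral_const_mul, key, Real.sqrt_eq_rpow,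
    ← Real.rpow_add twopi_pos]
  norm_num

section Std
variable {n : ℕ}

/-- coordinate factor functions -/
noncomputable def fij (i j k : Fin n) : ℝ → ℝ :=
  fun t => (if k = i then t else 1) * ((if k = j then t else 1) * g0 t)

lemma fij_integrable (i j k : Fin n) : Integrable (fij i j k) := by
  unfold fij
  by_cases hi : k = i
  · subst hi
    by_cases hj : k = j
    · subst hj
      simp only [eq_self_iff_true, if_true]
      have : (fun t : ℝ => t * (t * g0 t)) = fun t => t ^ 2 * g0 t := by funext t; ring
      rw [this]; exact integrable_sq_g0
    · simp only [eq_self_iff_true, if_true, if_neg hj, one_mul]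
      exact integrable_id_g0
  · by_cases hj : k = j
    · subst hj
      simp only [eq_self_iff_true, if_true, if_neg hi]
      simpa using integrable_id_g0
    · simp only [if_neg hi, if_neg hj, one_mul]
      exact integrable_g0

lemma fij_integral (i j k : Fin n) :
    ∫ t : ℝ, fij i j k t = if k = i then (if k = j then 1 else 0)
      else (if k = j then 0 else 1) := by
  unfold fij
  by_cases hi : k = i
  · subst hi
    by_cases hj : k = j
    · subst hj
      simp only [eq_self_iff_true, if_true]
      have : (fun t : ℝ => t * (t * g0 t)) = fun t => t ^ 2 * g0 t := by funext t; ring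
      simp_rw [show ∀ t : ℝ, t * (t * g0 t) = t ^ 2 * g0 t by intro t; ring]
      exact int_sq_g0
    · simp only [eq_self_iff_true, if_true, if_neg hj, one_mul]
      exact int_id_g0
  · by_cases hj : k = j
    · subst hj
      simp only [eq_self_iff_true, if_true, if_neg hi, one_mul]
      exact int_id_g0
    · simp only [if_neg hi, if_neg hj, one_mul]
      exact int_g0

lemma prod_fij (i j : Fin n) (y : Fin n → ℝ) :
    ∏ k, fij i j k (y k) = (∏ k, g0 (y k)) * (y i * y j) := by
  unfold fij
  rw [Finset.prod_mul_distrib, Finset.prod_mul_distrib]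
  rw [Finset.prod_ite_eq' Finset.univ i (fun k => y k),
    Finset.prod_ite_eq' Finset.univ j (fun k => y k)]
  simp [mul_comm, mul_assoc, mul_left_comm]

lemma J_integrable (i j : Fin n) :
    Integrable (fun y : Fin n → ℝ => (∏ k, g0 (y k)) * (y i * y j)) := by
  have := Integrable.fintype_prod (𝕜 := ℝ) (f := fij i j) (fun k => fij_integrable i j k)
  simp only [prod_fij] at this
  exact this

lemma J_value (i j : Fin n) :
    ∫ y : Fin n → ℝ, (∏ k, g0 (y k)) * (y i * y j) = if i = j then 1 else 0 := by
  have := integral_fintype_prod_eq_prod (𝕜 := ℝ) (fun k => fij i j k) (μ := fun _ => volume)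
  simp only [prod_fij] at this
  rw [show (∫ y : Fin n → ℝ, (∏ k, g0 (y k)) * (y i * y j)) = _ from this]
  simp_rw [fij_integral]
  by_cases h : i = j
  · subst h
    rw [if_pos rfl]
    apply Finset.prod_eq_one
    intro x _
    by_cases hx : x = i <;> simp [hx]
  · rw [if_neg h, Finset.prod_eq_zero (Finset.mem_univ i)]
    simp [h]

noncomputable def fi (i k : Fin n) : ℝ → ℝ := fun t => (if k = i then t else 1) * g0 t

lemma fi_integrable (i k : Fin n) : Integrable (fi i k) := by
  unfold fi
  by_cases hi : k = i
  · simp only [if_pos hi]; exact integrable_id_g0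
  · simp only [if_neg hi, one_mul]; exact integrable_g0

lemma fi_integral (i k : Fin n) : ∫ t : ℝ, fi i k t = if k = i then 0 else 1 := by
  unfold fi
  by_cases hi : k = i
  · simp only [if_pos hi]; exact int_id_g0
  · simp only [if_neg hi, one_mul]; exact int_g0

lemma prod_fi (i : Fin n) (y : Fin n → ℝ) :
    ∏ k, fi i k (y k) = (∏ k, g0 (y k)) * y i := by
  unfold fi
  rw [Finset.prod_mul_distrib, Finset.prod_ite_eq' Finset.univ i (fun k => y k)]
  simp [mul_comm]

lemma J1_integrable (i : Fin n) :
    Integrable (fun y : Fin n → ℝ => (∏ k, g0 (y k)) * y i) := by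
  have := Integrable.fintype_prod (𝕜 := ℝ) (f := fi i) (fun k => fi_integrable i k)
  simp only [prod_fi] at this
  exact this

lemma J1_value (i : Fin n) :
    ∫ y : Fin n → ℝ, (∏ k, g0 (y k)) * y i = 0 := by
  have := integral_fintype_prod_eq_prod (𝕜 := ℝ) (fun k => fi i k) (μ := fun _ => volume)
  simp only [prod_fi] at this
  rw [show (∫ y : Fin n → ℝ, (∏ k, g0 (y k)) * y i) = _ from this]
  rw [Finset.prod_eq_zero (Finset.mem_univ i)]
  simp [fi_integral]

lemma J0_integrable : Integrable (fun y : Fin n → ℝ => ∏ k, g0 (y k)) :=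
  Integrable.fintype_prod (𝕜 := ℝ) (f := fun _ => g0) (fun _ => integrable_g0)

lemma J0_value : ∫ y : Fin n → ℝ, ∏ k, g0 (y k) = 1 := by
  rw [show (∫ y : Fin n → ℝ, ∏ k, g0 (y k)) = _ from
    integral_fintype_prod_eq_prod (𝕜 := ℝ) (fun _ => g0) (μ := fun _ => volume)]
  simp [int_g0]

end Std

section Quad
variable {n : ℕ}

lemma quad_expand (M : Matrix (Fin n) (Fin n) ℝ) (y : Fin n → ℝ) :
    (∏ k, g0 (y k)) * (y ⬝ᵥ (M *ᵥ y))
      = ∑ i, ∑ j, M i j * ((∏ k, g0 (y k)) * (y i * y j)) := by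
  simp only [dotProduct, Matrix.mulVec, Finset.mul_sum, Finset.sum_mul]
  refine Finset.sum_congr rfl fun i _ => ?_
  refine Finset.sum_congr rfl fun j _ => ?_
  ring

lemma Q_integrable (M : Matrix (Fin n) (Fin n) ℝ) :
    Integrable (fun y : Fin n → ℝ => (∏ k, g0 (y k)) * (y ⬝ᵥ (M *ᵥ y))) := by
  simp_rw [quad_expand]
  apply integrable_finset_sum
  intro i _
  apply integrable_finset_sum
  intro j _
  exact (J_integrable i j).const_mul _

lemma Q_value (M : Matrix (Fin n) (Fin n) ℝ) :
    ∫ y : Fin n → ℝ, (∏ k, g0 (y k)) * (y ⬝ᵥ (M *ᵥ y)) = M.trace := by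
  simp_rw [quad_expand]
  rw [integral_finset_sum _ (fun i _ => integrable_finset_sum _
    (fun j _ => (J_integrable i j).const_mul (M i j)))]
  have : ∀ i : Fin n, ∫ y : Fin n → ℝ, ∑ j, M i j * ((∏ k, g0 (y k)) * (y i * y j))
      = M i i := by
    intro i
    rw [integral_finset_sum _ (fun j _ => (J_integrable i j).const_mul _)]
    have : ∀ j : Fin n, ∫ y : Fin n → ℝ, M i j * ((∏ k, g0 (y k)) * (y i * y j))
        = if i = j then M i j else 0 := by
      intro j
      rw [MeasureTheory.integral_const_mul, J_value]
      by_cases h : i = j <;> simp [h]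
    simp_rw [this]
    simp
  simp_rw [this]
  rfl

lemma Lin_integrable (w : Fin n → ℝ) :
    Integrable (fun y : Fin n → ℝ => (∏ k, g0 (y k)) * (w ⬝ᵥ y)) := by
  have : ∀ y : Fin n → ℝ, (∏ k, g0 (y k)) * (w ⬝ᵥ y)
      = ∑ i, w i * ((∏ k, g0 (y k)) * y i) := by
    intro y
    simp only [dotProduct, Finset.mul_sum]
    exact Finset.sum_congr rfl fun i _ => by ring
  simp_rw [this]
  exact integrable_finset_sum _ (fun i _ => (J1_integrable i).const_mul _)

lemma Lin_value (w : Fin n → ℝ) :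
    ∫ y : Fin n → ℝ, (∏ k, g0 (y k)) * (w ⬝ᵥ y) = 0 := by
  have : ∀ y : Fin n → ℝ, (∏ k, g0 (y k)) * (w ⬝ᵥ y)
      = ∑ i, w i * ((∏ k, g0 (y k)) * y i) := by
    intro y
    simp only [dotProduct, Finset.mul_sum]
    exact Finset.sum_congr rfl fun i _ => by ring
  simp_rw [this]
  rw [integral_finset_sum _ (fun i _ => (J1_integrable i).const_mul _)]
  simp [MeasureTheory.integral_const_mul, J1_value]

end Quad

section Aff
variable {n : ℕ}

noncomputable def affEquiv (m : Fin n → ℝ) (L : Matrix (Fin n) (Fin n) ℝ)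
    (hL : IsUnit L.det) : (Fin n → ℝ) ≃ᵐ (Fin n → ℝ) where
  toFun y := m + L *ᵥ y
  invFun x := L⁻¹ *ᵥ (x - m)
  left_inv y := by
    simp only [add_sub_cancel_left, Matrix.mulVec_mulVec, Matrix.nonsing_inv_mul _ hL,
      Matrix.one_mulVec]
  right_inv x := by
    simp only [Matrix.mulVec_mulVec, Matrix.mul_nonsing_inv _ hL, Matrix.one_mulVec,
      add_sub_cancel]
  measurable_toFun := by
    exact (continuous_const.add ((Matrix.mulVecLin L).continuous_of_finiteDimensional)).measurable
  measurable_invFun := by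
    exact (((Matrix.mulVecLin L⁻¹).continuous_of_finiteDimensional).comp
      (continuous_id.sub continuous_const)).measurable

lemma map_affEquiv (m : Fin n → ℝ) (L : Matrix (Fin n) (Fin n) ℝ) (hL : IsUnit L.det) :
    Measure.map (affEquiv m L hL) volume
      = ENNReal.ofReal |L.det|⁻¹ • (volume : Measure (Fin n → ℝ)) := by
  have hcoe : (affEquiv m L hL : (Fin n → ℝ) → (Fin n → ℝ))
      = (fun x => m + x) ∘ (Matrix.toLin' L) := by
    funext y
    simp [affEquiv, Matrix.toLin'_apply]
    rfl
  rw [hcoe, ← Measure.map_map (measurable_const_add m)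
    ((Matrix.toLin' L).continuous_of_finiteDimensional).measurable,
    Real.map_matrix_volume_pi_eq_smul_volume_pi (IsUnit.ne_zero hL),
    Measure.map_smul, MeasureTheory.map_add_left_eq_self volume m, abs_inv]

lemma aff_integral (m : Fin n → ℝ) (L : Matrix (Fin n) (Fin n) ℝ) (hL : IsUnit L.det)
    (F : (Fin n → ℝ) → ℝ) :
    ∫ x, F x = |L.det| * ∫ y, F (m + L *ᵥ y) := by
  have h1 : ∫ y, F ((affEquiv m L hL) y) = ∫ x, F x ∂(Measure.map (affEquiv m L hL) volume) :=
    (MeasureTheory.integral_map_equiv (affEquiv m L hL) F).symm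
  rw [map_affEquiv m L hL, integral_smul_measure] at h1
  have hdet : |L.det| ≠ 0 := by
    simp [IsUnit.ne_zero hL]
  have htr : (ENNReal.ofReal |L.det|⁻¹).toReal = |L.det|⁻¹ := by
    rw [ENNReal.toReal_ofReal (by positivity)]
  rw [htr] at h1
  have hco : (affEquiv m L hL : (Fin n → ℝ) → (Fin n → ℝ)) = fun y => m + L *ᵥ y := rfl
  rw [hco] at h1
  simp only [smul_eq_mul] at h1
  rw [h1, ← mul_assoc, mul_inv_cancel₀ hdet, one_mul]

lemma aff_integrable (m : Fin n → ℝ) (L : Matrix (Fin n) (Fin n) ℝ) (hL : IsUnit L.det)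
    (F : (Fin n → ℝ) → ℝ) :
    Integrable F ↔ Integrable (fun y => F (m + L *ᵥ y)) := by
  have h1 := integrable_map_equiv (μ := (volume : Measure (Fin n → ℝ))) (affEquiv m L hL) F
  rw [map_affEquiv m L hL] at h1
  have hdet : |L.det| ≠ 0 := by simp [IsUnit.ne_zero hL]
  rw [integrable_smul_measure (by simp [hdet, abs_pos]; exact IsUnit.ne_zero hL)
    ENNReal.ofReal_ne_top] at h1
  exact h1
end Aff

section MVN
variable {n : ℕ}
open scoped MatrixOrder

lemma dot_mulVec_left (L : Matrix (Fin n) (Fin n) ℝ) (y w : Fin n → ℝ) :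
    (L *ᵥ y) ⬝ᵥ w = y ⬝ᵥ (Lᵀ *ᵥ w) := by
  conv_lhs => rw [← Matrix.transpose_transpose L, Matrix.mulVec_transpose]
  rw [← Matrix.dotProduct_mulVec]

lemma phi_eq (y : Fin n → ℝ) :
    (2 * π) ^ (-(n:ℝ)/2) * Real.exp (-(1/2 : ℝ) * (y ⬝ᵥ y)) = ∏ k, g0 (y k) := by
  unfold g0
  rw [Finset.prod_mul_distrib, Finset.prod_const, ← Real.exp_sum]
  congr 1
  · rw [← Real.rpow_natCast ((2*π) ^ (-(1:ℝ)/2)) (Finset.univ.card),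
      ← Real.rpow_mul twopi_pos.le]
    congr 1
    simp [Finset.card_univ]
    ring
  · congr 1
    rw [dotProduct, Finset.mul_sum]
    exact Finset.sum_congr rfl fun k _ => by ring

lemma mvn_moment (S : Matrix (Fin n) (Fin n) ℝ) (hS : S.PosDef) (m : Fin n → ℝ)
    (M : Matrix (Fin n) (Fin n) ℝ) (w : Fin n → ℝ) (c : ℝ) :
    Integrable (fun x : Fin n → ℝ =>
        mvnPdf m S x * ((x - m) ⬝ᵥ (M *ᵥ (x - m)) + w ⬝ᵥ (x - m) + c)) ∧
    ∫ x : Fin n → ℝ, mvnPdf m S x * ((x - m) ⬝ᵥ (M *ᵥ (x - m)) + w ⬝ᵥ (x - m) + c)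
      = (M * S).trace + c := by
  have hSdet : (0:ℝ) < S.det := hS.det_pos
  set L := CFC.sqrt S with hLdef
  have hLL : L * L = S := CFC.sqrt_mul_sqrt_self S hS.posSemidef.nonneg
  have hLsym : Lᵀ = L := by
    have h := (Matrix.nonneg_iff_posSemidef.mp (CFC.sqrt_nonneg S)).isHermitian
    exact (by simpa using h : L.IsSymm)
  have hdet2 : L.det * L.det = S.det := by rw [← Matrix.det_mul, hLL]
  have hLdet : IsUnit L.det := by
    rw [isUnit_iff_ne_zero]
    intro h
    rw [h, mul_zero] at hdet2
    exact absurd hdet2.symm (ne_of_gt hSdet)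
  have habs : S.det ^ (-(1:ℝ)/2) = |L.det|⁻¹ := by
    have : S.det = |L.det| ^ (2:ℕ) := by
      rw [sq, ← abs_mul, hdet2, abs_of_pos hSdet]
    rw [this, ← Real.rpow_natCast |L.det| 2, ← Real.rpow_mul (abs_nonneg _),
      show ((2:ℕ):ℝ) * (-(1:ℝ)/2) = -1 by norm_num, Real.rpow_neg_one]
  have habs' : |L.det| * S.det ^ (-(1:ℝ)/2) = 1 := by
    rw [habs, mul_inv_cancel₀ (by simpa [abs_eq_zero] using hLdet.ne_zero)]
  have hLSL : L * S⁻¹ * L = 1 := by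
    rw [← hLL, Matrix.mul_inv_rev]
    have e1 : L * (L⁻¹ * L⁻¹) * L = (L * L⁻¹) * (L⁻¹ * L) := by simp only [mul_assoc]
    rw [e1, Matrix.mul_nonsing_inv _ hLdet, Matrix.nonsing_inv_mul _ hLdet, mul_one]
  -- pointwise identity on the y-side
  have hpdf : ∀ y : Fin n → ℝ,
      mvnPdf m S (m + L *ᵥ y) = S.det ^ (-(1:ℝ)/2) * ∏ k, g0 (y k) := by
    intro y
    unfold mvnPdf
    rw [add_sub_cancel_left]
    have h1 : (L *ᵥ y) ⬝ᵥ (S⁻¹ *ᵥ (L *ᵥ y)) = y ⬝ᵥ y := by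
      rw [Matrix.mulVec_mulVec, dot_mulVec_left, Matrix.mulVec_mulVec, hLsym,
        show L * (S⁻¹ * L) = L * S⁻¹ * L by rw [mul_assoc], hLSL, Matrix.one_mulVec]
    rw [h1]
    rw [show (Fintype.card (Fin n) : ℝ) = (n:ℝ) by simp]
    rw [mul_comm ((2 * π) ^ (-(n:ℝ)/2)) (S.det ^ (-(1:ℝ)/2)), mul_assoc]
    rw [show -(1/2 : ℝ) = (-(1/2) : ℝ) by norm_num] at *
    rw [phi_eq y]
  have hquad : ∀ y : Fin n → ℝ,
      ((m + L *ᵥ y) - m) ⬝ᵥ (M *ᵥ ((m + L *ᵥ y) - m)) + w ⬝ᵥ ((m + L *ᵥ y) - m) + c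
        = y ⬝ᵥ ((L * M * L) *ᵥ y) + (L *ᵥ w) ⬝ᵥ y + c := by
    intro y
    rw [add_sub_cancel_left]
    congr 1
    congr 1
    · rw [Matrix.mulVec_mulVec, dot_mulVec_left, Matrix.mulVec_mulVec, hLsym, mul_assoc]
    · rw [Matrix.dotProduct_mulVec, ← Matrix.mulVec_transpose, hLsym]
  have hy : ∀ y : Fin n → ℝ,
      mvnPdf m S (m + L *ᵥ y) *
        (((m + L *ᵥ y) - m) ⬝ᵥ (M *ᵥ ((m + L *ᵥ y) - m)) + w ⬝ᵥ ((m + L *ᵥ y) - m) + c)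
      = S.det ^ (-(1:ℝ)/2) *
          ((∏ k, g0 (y k)) * (y ⬝ᵥ ((L * M * L) *ᵥ y))
            + ((∏ k, g0 (y k)) * ((L *ᵥ w) ⬝ᵥ y)
            + (∏ k, g0 (y k)) * c)) := by
    intro y
    rw [hpdf y, hquad y]
    ring
  have hint_y : Integrable (fun y : Fin n → ℝ =>
      S.det ^ (-(1:ℝ)/2) *
          ((∏ k, g0 (y k)) * (y ⬝ᵥ ((L * M * L) *ᵥ y))
            + ((∏ k, g0 (y k)) * ((L *ᵥ w) ⬝ᵥ y)
            + (∏ k, g0 (y k)) * c))) := by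
    apply Integrable.const_mul
    exact (Q_integrable (L * M * L)).add
      ((Lin_integrable (L *ᵥ w)).add (J0_integrable.mul_const c))
  have hval_y : ∫ y : Fin n → ℝ,
      S.det ^ (-(1:ℝ)/2) *
          ((∏ k, g0 (y k)) * (y ⬝ᵥ ((L * M * L) *ᵥ y))
            + ((∏ k, g0 (y k)) * ((L *ᵥ w) ⬝ᵥ y)
            + (∏ k, g0 (y k)) * c))
      = S.det ^ (-(1:ℝ)/2) * ((M * S).trace + c) := by
    rw [MeasureTheory.integral_const_mul]
    congr 1
    have hg2 : Integrable (fun y : Fin n → ℝ =>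
        (∏ k, g0 (y k)) * ((L *ᵥ w) ⬝ᵥ y) + (∏ k, g0 (y k)) * c) :=
      (Lin_integrable (L *ᵥ w)).add (J0_integrable.mul_const c)
    rw [integral_add (Q_integrable (L * M * L)) hg2,
      integral_add (Lin_integrable (L *ᵥ w)) (J0_integrable.mul_const c)]
    rw [Q_value, Lin_value, MeasureTheory.integral_mul_const, J0_value]
    have htr : (L * M * L).trace = (M * S).trace := by
      rw [Matrix.trace_mul_comm, ← mul_assoc, hLL, Matrix.trace_mul_comm]
    rw [htr]
    ring
  constructor
  · rw [aff_integrable m L hLdet]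
    have : (fun y : Fin n → ℝ =>
        (fun x => mvnPdf m S x * ((x - m) ⬝ᵥ (M *ᵥ (x - m)) + w ⬝ᵥ (x - m) + c)) (m + L *ᵥ y))
        = fun y : Fin n → ℝ =>
          S.det ^ (-(1:ℝ)/2) *
            ((∏ k, g0 (y k)) * (y ⬝ᵥ ((L * M * L) *ᵥ y))
              + ((∏ k, g0 (y k)) * ((L *ᵥ w) ⬝ᵥ y)
              + (∏ k, g0 (y k)) * c)) := by
      funext y
      exact hy y
    rw [this]
    exact hint_y
  · rw [aff_integral m L hLdet]
    simp_rw [hy, hval_y]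
    rw [← mul_assoc, habs', one_mul]
end MVN

section Main
variable {n : ℕ}

lemma mvnPdf_pos (m : Fin n → ℝ) (S : Matrix (Fin n) (Fin n) ℝ) (hdet : 0 < S.det)
    (x : Fin n → ℝ) : 0 < mvnPdf m S x := by
  unfold mvnPdf
  have h2π : (0:ℝ) < 2 * π := twopi_pos
  positivity

lemma quad_shift (A : Matrix (Fin n) (Fin n) ℝ) (m x : Fin n → ℝ) :
    x ⬝ᵥ (A *ᵥ x) = (x - m) ⬝ᵥ (A *ᵥ (x - m))
      + (A *ᵥ m + Aᵀ *ᵥ m) ⬝ᵥ (x - m) + m ⬝ᵥ (A *ᵥ m) := by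
  have hx : x = (x - m) + m := by ring
  set u := x - m with hu
  have h1 : (Aᵀ *ᵥ m) ⬝ᵥ u = m ⬝ᵥ (A *ᵥ u) := by
    have := dot_mulVec_left Aᵀ m u
    rwa [Matrix.transpose_transpose] at this
  calc x ⬝ᵥ (A *ᵥ x) = (u + m) ⬝ᵥ (A *ᵥ (u + m)) := by rw [← hx]
    _ = u ⬝ᵥ (A *ᵥ u) + u ⬝ᵥ (A *ᵥ m) + (m ⬝ᵥ (A *ᵥ u) + m ⬝ᵥ (A *ᵥ m)) := by
        rw [Matrix.mulVec_add, add_dotProduct, dotProduct_add, dotProduct_add]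
    _ = u ⬝ᵥ (A *ᵥ u) + (A *ᵥ m + Aᵀ *ᵥ m) ⬝ᵥ u + m ⬝ᵥ (A *ᵥ m) := by
        rw [add_dotProduct, h1, dotProduct_comm (A *ᵥ m) u]
        ring
end Main

/-- KL divergence in the setting of Lemma 1: with `B = I + σ⁻²K`,
`D[N(Kα, KB⁻¹) ‖ N(0, K̂)] = ½[-log det(K̂⁻¹K) + log det B + tr(K̂⁻¹KB⁻¹)
  + αᵀKα + αᵀK(K̂⁻¹K - I)α - n]`. -/
theorem kl_lemma_one (n : ℕ) (K Khat : Matrix (Fin n) (Fin n) ℝ)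
    (hK : K.PosDef) (hKhat : Khat.PosDef) (σ : ℝ) (hσ : 0 < σ) (α : Fin n → ℝ)
    (B : Matrix (Fin n) (Fin n) ℝ) (hB : B = 1 + (σ ^ 2)⁻¹ • K) :
    ∫ x : Fin n → ℝ,
        mvnPdf (K *ᵥ α) (K * B⁻¹) x *
          Real.log (mvnPdf (K *ᵥ α) (K * B⁻¹) x / mvnPdf 0 Khat x) =
      (1 / 2) * (-Real.log (Khat⁻¹ * K).det + Real.log B.det +
        (Khat⁻¹ * K * B⁻¹).trace + α ⬝ᵥ (K *ᵥ α) +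
        α ⬝ᵥ ((K * (Khat⁻¹ * K - 1)) *ᵥ α) - n) := by
  have hσ2 : (0:ℝ) < (σ ^ 2)⁻¹ := by positivity
  have hKT : Kᵀ = K := (by simpa using hK.isHermitian : K.IsSymm)
  -- B is positive definite
  have hsmulpsd : ((σ ^ 2)⁻¹ • K).PosSemidef := by
    exact hK.posSemidef.smul hσ2.le
  have hBpd : B.PosDef := by
    rw [hB]
    exact Matrix.PosDef.add_posSemidef Matrix.PosDef.one hsmulpsd
  have hBdet : IsUnit B.det := isUnit_iff_ne_zero.mpr (ne_of_gt hBpd.det_pos)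
  have hBT : Bᵀ = B := (by simpa using hBpd.isHermitian : B.IsSymm)
  have hBiT : (B⁻¹)ᵀ = B⁻¹ := by rw [Matrix.transpose_nonsing_inv, hBT]
  -- commutation
  have hKB : K * B = B * K := by
    rw [hB, Matrix.mul_add, Matrix.add_mul, Matrix.mul_one, Matrix.one_mul,
      Matrix.mul_smul, Matrix.smul_mul]
  have hcomm : K * B⁻¹ = B⁻¹ * K := by
    have h : B * (K * B⁻¹) = K := by
      rw [← mul_assoc, ← hKB, mul_assoc, Matrix.mul_nonsing_inv _ hBdet, mul_one]
    calc K * B⁻¹ = (B⁻¹ * B) * (K * B⁻¹) := by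
          rw [Matrix.nonsing_inv_mul _ hBdet, one_mul]
      _ = B⁻¹ * K := by rw [mul_assoc, h]
  set S : Matrix (Fin n) (Fin n) ℝ := K * B⁻¹ with hSdef
  -- S is positive definite
  have hST : Sᵀ = S := by
    rw [hSdef, Matrix.transpose_mul, hBiT, hKT, ← hcomm]
  have hS : S.PosDef := by
    refine Matrix.PosDef.of_dotProduct_mulVec_pos ?_ ?_
    · rw [Matrix.IsHermitian]
      simpa using hST
    · intro x hx
      set z : Fin n → ℝ := B⁻¹ *ᵥ x with hz
      have hxz : x = B *ᵥ z := by
        rw [hz, Matrix.mulVec_mulVec, Matrix.mul_nonsing_inv _ hBdet, Matrix.one_mulVec]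
      have hzne : z ≠ 0 := by
        intro h
        apply hx
        rw [hxz, h, Matrix.mulVec_zero]
      have hquad : x ⬝ᵥ (S *ᵥ x) = z ⬝ᵥ (K *ᵥ z) + (σ ^ 2)⁻¹ * ((K *ᵥ z) ⬝ᵥ (K *ᵥ z)) := by
        have h1 : S *ᵥ x = K *ᵥ z := by
          rw [hSdef, ← Matrix.mulVec_mulVec, hz]
        rw [h1, hxz, dot_mulVec_left, hBT]
        have h2 : B *ᵥ (K *ᵥ z) = K *ᵥ z + (σ ^ 2)⁻¹ • ((K * K) *ᵥ z) := by
          rw [hB, Matrix.add_mulVec, Matrix.one_mulVec, Matrix.smul_mulVec,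
            ← Matrix.mulVec_mulVec]
        rw [h2, dotProduct_add, dotProduct_smul]
        congr 1
        rw [smul_eq_mul]
        congr 1
        rw [← Matrix.mulVec_mulVec]
        have := dot_mulVec_left K z (K *ᵥ z)
        rw [hKT] at this
        rw [← this]
      have hKz : (0:ℝ) < z ⬝ᵥ (K *ᵥ z) := by
        have := hK.dotProduct_mulVec_pos hzne
        simpa using this
      have hKz2 : (0:ℝ) ≤ (K *ᵥ z) ⬝ᵥ (K *ᵥ z) := by
        rw [dotProduct]
        exact Finset.sum_nonneg fun i _ => mul_self_nonneg _
      have : (0:ℝ) < x ⬝ᵥ (S *ᵥ x) := by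
        rw [hquad]
        have : (0:ℝ) ≤ (σ ^ 2)⁻¹ * ((K *ᵥ z) ⬝ᵥ (K *ᵥ z)) := by positivity
        linarith
      simpa using this
  have hSdet : (0:ℝ) < S.det := hS.det_pos
  have hSdetU : IsUnit S.det := isUnit_iff_ne_zero.mpr (ne_of_gt hSdet)
  set m : Fin n → ℝ := K *ᵥ α with hm
  set A : Matrix (Fin n) (Fin n) ℝ := Khat⁻¹ with hA
  set M₀ : Matrix (Fin n) (Fin n) ℝ := (-(1/2 : ℝ)) • S⁻¹ + (1/2 : ℝ) • A with hM₀
  set w₀ : Fin n → ℝ := (1/2 : ℝ) • (A *ᵥ m + Aᵀ *ᵥ m) with hw₀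
  set D : ℝ := Real.log (S.det ^ (-(1:ℝ)/2)) - Real.log (Khat.det ^ (-(1:ℝ)/2)) with hD
  set c₀ : ℝ := D + (1/2 : ℝ) * (m ⬝ᵥ (A *ᵥ m)) with hc₀
  -- pointwise identity
  have hlog : ∀ x : Fin n → ℝ,
      mvnPdf m S x * Real.log (mvnPdf m S x / mvnPdf 0 Khat x)
        = mvnPdf m S x * ((x - m) ⬝ᵥ (M₀ *ᵥ (x - m)) + w₀ ⬝ᵥ (x - m) + c₀) := by
    intro x
    have hp : 0 < mvnPdf m S x := mvnPdf_pos m S hSdet x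
    have hq : 0 < mvnPdf 0 Khat x := mvnPdf_pos 0 Khat hKhat.det_pos x
    congr 1
    rw [Real.log_div (ne_of_gt hp) (ne_of_gt hq)]
    unfold mvnPdf
    have e1 : (0:ℝ) < (2 * π) ^ (-(Fintype.card (Fin n) : ℝ) / 2) :=
      Real.rpow_pos_of_pos twopi_pos _
    have e2 : (0:ℝ) < S.det ^ (-(1:ℝ)/2) := Real.rpow_pos_of_pos hSdet _
    have e3 : (0:ℝ) < Khat.det ^ (-(1:ℝ)/2) := Real.rpow_pos_of_pos hKhat.det_pos _
    rw [Real.log_mul (mul_pos e1 e2).ne' (Real.exp_ne_zero _),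
      Real.log_mul (mul_pos e1 e3).ne' (Real.exp_ne_zero _),
      Real.log_mul e1.ne' e2.ne', Real.log_mul e1.ne' e3.ne',
      Real.log_exp, Real.log_exp, sub_zero]
    have hMv : (x - m) ⬝ᵥ (M₀ *ᵥ (x - m))
        = (-(1/2 : ℝ)) * ((x - m) ⬝ᵥ (S⁻¹ *ᵥ (x - m)))
          + (1/2 : ℝ) * ((x - m) ⬝ᵥ (A *ᵥ (x - m))) := by
      rw [hM₀, Matrix.add_mulVec, dotProduct_add, Matrix.smul_mulVec,
        Matrix.smul_mulVec, dotProduct_smul, dotProduct_smul, smul_eq_mul, smul_eq_mul]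
    have hwv : w₀ ⬝ᵥ (x - m) = (1/2 : ℝ) * ((A *ᵥ m + Aᵀ *ᵥ m) ⬝ᵥ (x - m)) := by
      rw [hw₀, smul_dotProduct, smul_eq_mul]
    rw [hMv, hwv, hc₀, hD]
    have hqs := quad_shift A m x
    ring_nf
    ring_nf at hqs
    linarith [hqs]
  -- apply the master moment lemma
  have hmom := mvn_moment S hS m M₀ w₀ c₀
  rw [show (∫ x : Fin n → ℝ,
        mvnPdf m S x * Real.log (mvnPdf m S x / mvnPdf 0 Khat x))
      = ∫ x : Fin n → ℝ,
        mvnPdf m S x * ((x - m) ⬝ᵥ (M₀ *ᵥ (x - m)) + w₀ ⬝ᵥ (x - m) + c₀) by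
    exact integral_congr_ae (Filter.Eventually.of_forall hlog)]
  rw [hmom.2]
  -- compute the trace
  have htr : (M₀ * S).trace
      = (-(1/2 : ℝ)) * n + (1/2 : ℝ) * (Khat⁻¹ * K * B⁻¹).trace := by
    rw [hM₀, Matrix.add_mul, Matrix.smul_mul, Matrix.smul_mul, Matrix.trace_add,
      Matrix.trace_smul, Matrix.trace_smul, Matrix.nonsing_inv_mul _ hSdetU,
      Matrix.trace_one, hA, hSdef, ← mul_assoc]
    simp [smul_eq_mul]
  -- compute D
  have hDval : D = (-(1/2 : ℝ)) * Real.log S.det + (1/2 : ℝ) * Real.log Khat.det := by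
    rw [hD, Real.log_rpow hSdet, Real.log_rpow hKhat.det_pos]
    ring
  have hdetS : Real.log S.det = Real.log K.det - Real.log B.det := by
    rw [hSdef, Matrix.det_mul, Matrix.det_nonsing_inv, Ring.inverse_eq_inv',
      Real.log_mul (ne_of_gt hK.det_pos) (inv_ne_zero (ne_of_gt hBpd.det_pos)),
      Real.log_inv]
    ring
  have hdetQ : Real.log (Khat⁻¹ * K).det = Real.log K.det - Real.log Khat.det := by
    rw [Matrix.det_mul, Matrix.det_nonsing_inv, Ring.inverse_eq_inv', Real.log_mul
      (inv_ne_zero (ne_of_gt hKhat.det_pos)) (ne_of_gt hK.det_pos), Real.log_inv]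
    ring
  -- compute the mean quadratic term
  have hmAm : m ⬝ᵥ (A *ᵥ m) = α ⬝ᵥ (K *ᵥ α) + α ⬝ᵥ ((K * (Khat⁻¹ * K - 1)) *ᵥ α) := by
    have h1 : m ⬝ᵥ (A *ᵥ m) = α ⬝ᵥ ((K * (A * K)) *ᵥ α) := by
      rw [hm, Matrix.mulVec_mulVec, dot_mulVec_left, hKT, Matrix.mulVec_mulVec]
    have h2 : K * (Khat⁻¹ * K - 1) = K * (A * K) - K := by
      rw [Matrix.mul_sub, Matrix.mul_one, hA]
    rw [h1, h2, Matrix.sub_mulVec, dotProduct_sub]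
    ring
  rw [htr, hc₀, hDval, hdetS, hdetQ]
  rw [show (Matrix.trace (Khat⁻¹ * K * B⁻¹) : ℝ) = (Khat⁻¹ * K * B⁻¹).trace from rfl]
  rw [hmAm]
  ring
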